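/- (Generalized Plotkin bound) Let D be an M × M symmetric matrix of nonnegative integers and suppose there exist p_1,...,p_M ∈ F_2^r with d(p_i,p_j) ≥ D_{i,j} for all i ≠ j. Then r ≥ (4/M²)·Σ_{i<j} D_{i,j} if M is even, and r ≥ (4/(M²−1))·Σ_{i<j} D_{i,j} if M is odd. -/

import Mathlib

open Finset

private lemma consec_nonneg (k : ℤ) : 0 ≤ k * (k + 1) := by
  rcases le_or_gt 0 k with h | h
  · exact mul_nonneg h (by linarith)
  · nlinarith

private lemma double_sum_sq {M : ℕ} (x : Fin M → ℚ) (hx : ∀ i, x i ^ 2 = x i) :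
    ∑ i, ∑ j, (x i - x j) ^ 2 = 2 * M * (∑ i, x i) - 2 * (∑ i, x i) ^ 2 := by
  have h1 : ∑ i, ∑ j, (x i - x j) ^ 2
      = ∑ i, ∑ j, (x i - 2 * (x i * x j) + x j) := by
    refine Finset.sum_congr rfl fun i _ => Finset.sum_congr rfl fun j _ => ?_
    rw [sub_sq, hx i, hx j]; ring
  have h2 : ((∑ i, x i) ^ 2 : ℚ) = ∑ i, ∑ j, x i * x j := by
    rw [sq, Finset.sum_mul_sum]
  rw [h1]
  simp only [Finset.sum_add_distrib, Finset.sum_sub_distrib, ← Finset.mul_sum,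
    Finset.sum_const, card_univ, Fintype.card_fin, nsmul_eq_mul, h2, Finset.sum_mul,
    Finset.mul_sum]
  ring_nf
  rw [Finset.sum_mul]
  have h3 : ∑ i, (M : ℚ) * x i * 2 = ∑ i, (M : ℚ) * 2 * x i :=
    Finset.sum_congr rfl fun i _ => by ring
  rw [h3]
  ring

private lemma zmod2_aux (a b : ZMod 2) :
    ((if a ≠ b then 1 else 0 : ℚ)) =
      ((if a = 1 then (1 : ℚ) else 0) - (if b = 1 then (1 : ℚ) else 0)) ^ 2 := by
  have key : ∀ x : ZMod 2, x = 0 ∨ x = 1 := by decide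
  rcases key a with rfl | rfl <;> rcases key b with rfl | rfl <;> norm_num [show (0 : ZMod 2) ≠ 1 by decide, show (1 : ZMod 2) ≠ 0 by decide]

open Finset in
/-- Generalized Plotkin bound for irregular-distance codes. -/
theorem stmt_6 {M r : ℕ} (D : Fin M → Fin M → ℕ)
    (hsymm : ∀ i j, D i j = D j i)
    (p : Fin M → (Fin r → ZMod 2))
    (hp : ∀ i j, i ≠ j → D i j ≤ hammingDist (p i) (p j)) :
    (if Even M then
        (4 : ℚ) / (M ^ 2) * ∑ i, ∑ j, if i < j then (D i j : ℚ) else 0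
      else
        (4 : ℚ) / (M ^ 2 - 1) * ∑ i, ∑ j, if i < j then (D i j : ℚ) else 0) ≤ r := by
  set X : Fin M → Fin r → ℚ := fun i k => if p i k = 1 then 1 else 0 with hX
  have hdist : ∀ i j, (hammingDist (p i) (p j) : ℚ) = ∑ k, (X i k - X j k) ^ 2 := by
    intro i j
    rw [hammingDist, Finset.card_filter]
    push_cast
    exact Finset.sum_congr rfl fun k _ => zmod2_aux (p i k) (p j k)
  set S : ℚ := ∑ i, ∑ j, if i < j then (D i j : ℚ) else 0 with hS
  set T : ℚ := ∑ i, ∑ j, (hammingDist (p i) (p j) : ℚ) with hT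
  -- 2 * S ≤ T
  have h1 : 2 * S ≤ T := by
    have hA : T = 2 * ∑ i, ∑ j, if i < j then (hammingDist (p i) (p j) : ℚ) else 0 := by
      have hsplit : ∀ i j : Fin M, (hammingDist (p i) (p j) : ℚ) =
          (if i < j then (hammingDist (p i) (p j) : ℚ) else 0) +
          (if j < i then (hammingDist (p i) (p j) : ℚ) else 0) := by
        intro i j
        rcases lt_trichotomy i j with h | h | h
        · simp [h, not_lt_of_gt h]
        · simp [h, hammingDist_self]
        · simp [h, not_lt_of_gt h]
      rw [hT]
      calc (∑ i, ∑ j, (hammingDist (p i) (p j) : ℚ))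
          = ∑ i, ∑ j, ((if i < j then (hammingDist (p i) (p j) : ℚ) else 0) +
              (if j < i then (hammingDist (p i) (p j) : ℚ) else 0)) :=
            Finset.sum_congr rfl fun i _ => Finset.sum_congr rfl fun j _ => hsplit i j
        _ = (∑ i, ∑ j, if i < j then (hammingDist (p i) (p j) : ℚ) else 0) +
            ∑ i, ∑ j, if j < i then (hammingDist (p i) (p j) : ℚ) else 0 := by
            simp [Finset.sum_add_distrib]
        _ = (∑ i, ∑ j, if i < j then (hammingDist (p i) (p j) : ℚ) else 0) +
            ∑ j, ∑ i, if j < i then (hammingDist (p i) (p j) : ℚ) else 0 := by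
            rw [Finset.sum_comm (f := fun i j => if j < i then (hammingDist (p i) (p j) : ℚ) else 0)]
        _ = 2 * ∑ i, ∑ j, if i < j then (hammingDist (p i) (p j) : ℚ) else 0 := by
            rw [two_mul]
            congr 1
            exact Finset.sum_congr rfl fun j _ => Finset.sum_congr rfl fun i _ => by
              rw [hammingDist_comm]
    rw [hA]
    have : S ≤ ∑ i, ∑ j, if i < j then (hammingDist (p i) (p j) : ℚ) else 0 := by
      refine Finset.sum_le_sum fun i _ => Finset.sum_le_sum fun j _ => ?_
      split
      · exact_mod_cast hp i j (ne_of_lt ‹i < j›)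
      · exact le_rfl
    linarith
  -- coordinate counts
  set n : Fin r → ℕ := fun k => ∑ i, if p i k = 1 then 1 else 0 with hn
  have hsk : ∀ k, ∑ i, X i k = (n k : ℚ) := by
    intro k
    rw [hn]
    push_cast
    exact Finset.sum_congr rfl fun i _ => by by_cases h : p i k = 1 <;> simp [hX, h]
  have hXsq : ∀ (k : Fin r) (i : Fin M), X i k ^ 2 = X i k := by
    intro k i
    by_cases h : p i k = 1 <;> simp [hX, h]
  have h2 : T = ∑ k, (2 * M * (n k : ℚ) - 2 * (n k : ℚ) ^ 2) := by
    rw [hT]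
    calc (∑ i, ∑ j, (hammingDist (p i) (p j) : ℚ))
        = ∑ i, ∑ j, ∑ k, (X i k - X j k) ^ 2 :=
          Finset.sum_congr rfl fun i _ => Finset.sum_congr rfl fun j _ => hdist i j
      _ = ∑ i, ∑ k, ∑ j, (X i k - X j k) ^ 2 :=
          Finset.sum_congr rfl fun i _ => Finset.sum_comm
      _ = ∑ k, ∑ i, ∑ j, (X i k - X j k) ^ 2 := Finset.sum_comm
      _ = ∑ k, (2 * M * (n k : ℚ) - 2 * (n k : ℚ) ^ 2) := by
          refine Finset.sum_congr rfl fun k _ => ?_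
          rw [double_sum_sq (fun i => X i k) (hXsq k), hsk k]
  split
  case isTrue hM =>
    -- even case
    rcases Nat.eq_zero_or_pos M with hM0 | hM0
    · subst hM0
      have hS0 : S = 0 := by rw [hS]; simp
      rw [hS0, mul_zero]
      positivity
    · have hb : ∀ k : Fin r, 2 * M * (n k : ℚ) - 2 * (n k : ℚ) ^ 2 ≤ (M : ℚ) ^ 2 / 2 := by
        intro k
        nlinarith [sq_nonneg ((M : ℚ) - 2 * (n k : ℚ))]
      have hT2 : T ≤ r * ((M : ℚ) ^ 2 / 2) := by
        rw [h2]
        calc ∑ k, (2 * M * (n k : ℚ) - 2 * (n k : ℚ) ^ 2) ≤ ∑ _k : Fin r, (M : ℚ) ^ 2 / 2 :=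
              Finset.sum_le_sum fun k _ => hb k
          _ = r * ((M : ℚ) ^ 2 / 2) := by simp [Finset.sum_const, mul_comm]
      have hpos : (0 : ℚ) < (M : ℚ) ^ 2 := by positivity
      rw [div_mul_eq_mul_div, div_le_iff₀ hpos]
      nlinarith
  case isFalse hM =>
    obtain ⟨m, hm⟩ := Nat.not_even_iff_odd.mp hM
    have hb : ∀ k : Fin r, 2 * M * (n k : ℚ) - 2 * (n k : ℚ) ^ 2 ≤ ((M : ℚ) ^ 2 - 1) / 2 := by
      intro k
      have hZ : (4 * (M : ℤ) * (n k) - 4 * (n k : ℤ) ^ 2) ≤ (M : ℤ) ^ 2 - 1 := by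
        have h := consec_nonneg ((m : ℤ) - (n k : ℤ))
        have hm' : (M : ℤ) = 2 * m + 1 := by exact_mod_cast hm
        nlinarith
      have hQ : (4 * (M : ℚ) * (n k) - 4 * (n k : ℚ) ^ 2) ≤ (M : ℚ) ^ 2 - 1 := by
        exact_mod_cast hZ
      linarith
    have hT2 : T ≤ r * (((M : ℚ) ^ 2 - 1) / 2) := by
      rw [h2]
      calc ∑ k, (2 * M * (n k : ℚ) - 2 * (n k : ℚ) ^ 2)
            ≤ ∑ _k : Fin r, ((M : ℚ) ^ 2 - 1) / 2 := Finset.sum_le_sum fun k _ => hb k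
        _ = r * (((M : ℚ) ^ 2 - 1) / 2) := by simp [Finset.sum_const, mul_comm]
    rcases eq_or_lt_of_le (Nat.one_le_iff_ne_zero.mpr (by omega : M ≠ 0)) with h1' | h1'
    · -- M = 1
      have : (M : ℚ) ^ 2 - 1 = 0 := by rw [← h1']; norm_num
      rw [this, div_zero, zero_mul]
      positivity
    · have hpos : (0 : ℚ) < (M : ℚ) ^ 2 - 1 := by
        have : (2 : ℚ) ≤ (M : ℚ) := by exact_mod_cast h1'
        nlinarith
      rw [div_mul_eq_mul_div, div_le_iff₀ hpos]
      nlinarith
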